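/- Let (R, M) be a commutative local ring. If every prime ideal of R is a direct sum of cyclic R-modules, then M can be written as an internal direct sum M = ⊕_{λ∈Λ} Rw_λ with R/Ann(w_λ) a principal ideal ring for each λ ∈ Λ. -/

import Mathlib

/-- An ideal `P` of a commutative ring `R` is an internal direct sum of cyclic
`R`-modules: there is a family of elements of `P` whose cyclic spans are
independent and whose supremum is `P`. -/
def IsDirectSumOfCyclics {R : Type} [CommRing R] (P : Ideal R) : Prop :=
  ∃ (ι : Type) (w : ι → R), (∀ i, w i ∈ P) ∧
    iSupIndep (fun i => Ideal.span {w i}) ∧ (⨆ i, Ideal.span {w i}) = P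

open IsLocalRing

/-- If `a ∈ (t)^m` but `a ∉ (t)^(m+1)` in a local ring with maximal ideal `(t)`,
then `a` is a unit multiple of `t^m`. -/
lemma aux_unit_rep {S : Type} [CommRing S] [IsLocalRing S] {t a : S} {m : ℕ}
    (hmax : maximalIdeal S = Ideal.span {t})
    (h1 : a ∈ Ideal.span {t} ^ m) (h2 : a ∉ Ideal.span {t} ^ (m + 1)) :
    ∃ c : S, IsUnit c ∧ a = c * t ^ m := by
  rw [Ideal.span_singleton_pow] at h1
  obtain ⟨c, hc⟩ := Ideal.mem_span_singleton'.mp h1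
  refine ⟨c, ?_, hc.symm⟩
  by_contra hcu
  have hcm : c ∈ maximalIdeal S := (mem_maximalIdeal c).mpr hcu
  rw [hmax] at hcm
  obtain ⟨d, hd⟩ := Ideal.mem_span_singleton'.mp hcm
  apply h2
  rw [Ideal.span_singleton_pow, Ideal.mem_span_singleton']
  exact ⟨d, by rw [← hc, ← hd]; ring⟩

/-- A local ring whose maximal ideal is principal generated by `t` with
`⨅ n, (t)^n = ⊥` is a principal ideal ring. -/
lemma aux_pir {S : Type} [CommRing S] [IsLocalRing S] {t : S}
    (hmax : maximalIdeal S = Ideal.span {t})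
    (hJ : (⨅ n : ℕ, Ideal.span {t} ^ n) = ⊥) :
    IsPrincipalIdealRing S := by
  classical
  constructor
  intro I
  by_cases hI : I = ⊥
  · rw [hI]; exact ⟨⟨0, Ideal.span_zero.symm⟩⟩
  · have hex : ∃ n, ¬ I ≤ Ideal.span {t} ^ n := by
      by_contra hc
      push_neg at hc
      exact hI (le_bot_iff.mp (hJ ▸ le_iInf hc))
    have hn0 : ¬ I ≤ Ideal.span {t} ^ (Nat.find hex) := Nat.find_spec hex
    have hpos : Nat.find hex ≠ 0 := by
      intro h0
      apply hn0; rw [h0, pow_zero, Ideal.one_eq_top]; exact le_top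
    obtain ⟨m, hm⟩ := Nat.exists_eq_succ_of_ne_zero hpos
    have hIm : I ≤ Ideal.span {t} ^ m := by
      by_contra hb
      exact Nat.find_min hex (hm ▸ Nat.lt_succ_self m) hb
    rw [hm] at hn0
    obtain ⟨y, hyI, hy⟩ := SetLike.not_le_iff_exists.mp hn0
    obtain ⟨c, hcu, hc⟩ := aux_unit_rep hmax (hIm hyI) hy
    obtain ⟨cu, rfl⟩ := hcu
    have htm : t ^ m ∈ I := by
      have : (↑cu⁻¹ : S) * y ∈ I := I.mul_mem_left _ hyI
      rwa [hc, ← mul_assoc, Units.inv_mul, one_mul] at this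
    refine ⟨⟨t ^ m, le_antisymm ?_ ?_⟩⟩
    · rw [Ideal.submodule_span_eq, ← Ideal.span_singleton_pow]
      exact hIm
    · rw [Ideal.submodule_span_eq, Ideal.span_le, Set.singleton_subset_iff]
      exact htm

theorem maximal_ideal_decomposition_of_primes_direct_sum
    {R : Type} [CommRing R] [IsLocalRing R]
    (h : ∀ P : Ideal R, P.IsPrime → IsDirectSumOfCyclics P) :
    ∃ (ι : Type) (w : ι → R), (∀ i, w i ∈ IsLocalRing.maximalIdeal R) ∧
      iSupIndep (fun i => Ideal.span {w i}) ∧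
      (⨆ i, Ideal.span {w i}) = IsLocalRing.maximalIdeal R ∧
      ∀ i, IsPrincipalIdealRing (R ⧸ Ideal.torsionOf R R (w i)) := by
  classical
  obtain ⟨ι, w, hw, hindep, hsup⟩ :=
    h (maximalIdeal R) (maximalIdeal.isMaximal R).isPrime
  refine ⟨ι, w, hw, hindep, hsup, ?_⟩
  intro i
  by_cases hwi : w i = 0
  · -- torsionOf = ⊤, quotient is trivial
    rw [hwi, Ideal.torsionOf_zero]
    have : Subsingleton (R ⧸ (⊤ : Ideal R)) :=
      Ideal.Quotient.subsingleton_iff.mpr rfl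
    constructor
    intro I
    exact ⟨⟨0, Subsingleton.elim _ _⟩⟩
  · set A := Ideal.torsionOf R R (w i) with hA
    have hA_ne : A ≠ ⊤ := by
      intro htop
      apply hwi
      have h1 : (1 : R) ∈ A := htop ▸ Submodule.mem_top
      simpa using (Ideal.mem_torsionOf_iff (w i) 1).mp h1
    haveI : Nontrivial (R ⧸ A) := Ideal.Quotient.nontrivial_iff.mpr hA_ne
    haveI : IsLocalRing (R ⧸ A) :=
      IsLocalRing.of_surjective' (Ideal.Quotient.mk A) Ideal.Quotient.mk_surjective
    set π := Ideal.Quotient.mk A with hπ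
    set t := π (w i) with ht
    -- cross annihilation
    have hcross : ∀ j, j ≠ i → w j ∈ A := by
      intro j hj
      have h1 : w j * w i ∈ Ideal.span {w j} :=
        Ideal.mul_mem_right _ _ (Ideal.mem_span_singleton_self _)
      have h2 : w j * w i ∈ ⨆ (k) (_ : k ≠ j), Ideal.span {w k} := by
        refine Submodule.mem_iSup_of_mem i (Submodule.mem_iSup_of_mem (Ne.symm hj) ?_)
        exact Ideal.mul_mem_left _ _ (Ideal.mem_span_singleton_self _)
      have := Submodule.disjoint_def.mp (hindep j) _ h1 h2
      rw [hA, Ideal.mem_torsionOf_iff, smul_eq_mul]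
      exact this
    -- max ideal of quotient is (t)
    have hmapmax : Ideal.map π (maximalIdeal R) = maximalIdeal (R ⧸ A) := by
      apply le_antisymm
      · rw [Ideal.map_le_iff_le_comap]
        intro r hr
        rw [Ideal.mem_comap, mem_maximalIdeal, mem_nonunits_iff]
        intro hu
        obtain ⟨s, hs⟩ := isUnit_iff_exists_inv.mp hu
        obtain ⟨s', rfl⟩ := Ideal.Quotient.mk_surjective s
        have : r * s' - 1 ∈ A := by
          rw [← Ideal.Quotient.eq_zero_iff_mem, map_sub, map_mul, map_one, hs, sub_self]
        have h1 : r * s' - 1 ∈ maximalIdeal R := le_maximalIdeal hA_ne this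
        have h2 : r * s' ∈ maximalIdeal R := Ideal.mul_mem_right _ _ hr
        have : (1 : R) ∈ maximalIdeal R := by
          have := Submodule.sub_mem _ h2 h1
          simpa using this
        exact (maximalIdeal.isMaximal R).ne_top (Ideal.eq_top_of_isUnit_mem _ this isUnit_one)
      · intro x hx
        obtain ⟨r, rfl⟩ := Ideal.Quotient.mk_surjective x
        by_cases hr : r ∈ maximalIdeal R
        · exact Ideal.mem_map_of_mem _ hr
        · exfalso
          have hu : IsUnit r := by
            by_contra hnu
            exact hr ((mem_maximalIdeal r).mpr hnu)
          rw [mem_maximalIdeal, mem_nonunits_iff] at hx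
          exact hx (hu.map π)
    have hmax : maximalIdeal (R ⧸ A) = Ideal.span {t} := by
      rw [← hmapmax, ← hsup, Ideal.map_iSup]
      apply le_antisymm
      · apply iSup_le
        intro j
        rw [Ideal.map_span, Set.image_singleton]
        by_cases hj : j = i
        · rw [hj]
        · have : π (w j) = 0 := Ideal.Quotient.eq_zero_iff_mem.mpr (hcross j hj)
          rw [this, Ideal.span_singleton_eq_bot.mpr rfl]
          exact bot_le
      · have : Ideal.span {t} = Ideal.map π (Ideal.span {w i}) := by
          rw [Ideal.map_span, Set.image_singleton]
        rw [this]
        exact le_iSup (fun j => Ideal.map π (Ideal.span {w j})) i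
    -- the key: ⨅ (t)^n = ⊥
    have hJbot : (⨅ n : ℕ, Ideal.span {t} ^ n) = ⊥ := by
      by_cases hnil : ∃ n : ℕ, t ^ n = 0
      · obtain ⟨n, hn⟩ := hnil
        apply le_bot_iff.mp
        refine le_trans (iInf_le _ n) ?_
        rw [Ideal.span_singleton_pow, hn, Ideal.span_singleton_eq_bot.mpr rfl]
      · push_neg at hnil
        set J := ⨅ n : ℕ, Ideal.span {t} ^ n with hJ
        have hle : ∀ n, J ≤ Ideal.span {t} ^ n := fun n => iInf_le _ n
        have hordmem : ∀ {a : R ⧸ A}, a ∉ J → ∃ c : R ⧸ A, ∃ m : ℕ,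
            IsUnit c ∧ a = c * t ^ m := by
          intro a ha
          have hex : ∃ n, a ∉ Ideal.span {t} ^ n := by
            by_contra hc
            push_neg at hc
            exact ha (Submodule.mem_iInf _ |>.mpr hc)
          have hn0 : a ∉ Ideal.span {t} ^ (Nat.find hex) := Nat.find_spec hex
          have hpos : Nat.find hex ≠ 0 := by
            intro h0
            apply hn0; rw [h0, pow_zero, Ideal.one_eq_top]; exact Submodule.mem_top
          obtain ⟨m, hm⟩ := Nat.exists_eq_succ_of_ne_zero hpos
          have h1 : a ∈ Ideal.span {t} ^ m := by
            by_contra hb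
            exact Nat.find_min hex (hm ▸ Nat.lt_succ_self m) hb
          rw [hm] at hn0
          obtain ⟨c, hcu, hc⟩ := aux_unit_rep hmax h1 hn0
          exact ⟨c, m, hcu, hc⟩
        have hunit_sub : ∀ x : R ⧸ A, x ∈ maximalIdeal (R ⧸ A) → IsUnit (1 - x) :=
          fun x hx => isUnit_one_sub_self_of_mem_nonunits x ((mem_maximalIdeal x).mp hx)
        -- J is prime
        have hJprime : J.IsPrime := by
          constructor
          · intro htop
            have : (1 : R ⧸ A) ∈ Ideal.span {t} ^ 1 := hle 1 (htop ▸ Submodule.mem_top)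
            rw [pow_one] at this
            have := Ideal.eq_top_of_isUnit_mem _ this isUnit_one
            rw [← hmax] at this
            exact (maximalIdeal.isMaximal (R ⧸ A)).ne_top this
          · intro a b hab
            by_contra hcon
            push_neg at hcon
            obtain ⟨ha, hb⟩ := hcon
            obtain ⟨c, m, hcu, rfl⟩ := hordmem ha
            obtain ⟨d, n, hdu, rfl⟩ := hordmem hb
            have hmem : c * t ^ m * (d * t ^ n) ∈ Ideal.span {t ^ (m + n + 1)} := by
              rw [← Ideal.span_singleton_pow]
              exact hle (m + n + 1) hab
            obtain ⟨e, he⟩ := Ideal.mem_span_singleton'.mp hmem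
            -- c * d * t^(m+n) = e * t^(m+n+1)
            obtain ⟨cu, rfl⟩ := hcu
            obtain ⟨du, rfl⟩ := hdu
            have h1 : (↑cu⁻¹ : R ⧸ A) * ↑cu = 1 := Units.inv_mul cu
            have h2 : (↑du⁻¹ : R ⧸ A) * ↑du = 1 := Units.inv_mul du
            have he' : t ^ (m + n) * (1 - ((↑cu⁻¹ : R ⧸ A) * ↑du⁻¹ * e * t)) = 0 := by
              linear_combination (-((↑cu⁻¹ : R ⧸ A) * ↑du⁻¹)) * he +
                (-((↑du⁻¹ : R ⧸ A) * ↑du * t ^ (m + n))) * h1 +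
                (-(t ^ (m + n) : R ⧸ A)) * h2
            have hu : IsUnit (1 - ((↑cu⁻¹ : R ⧸ A) * ↑du⁻¹ * e * t)) := by
              apply hunit_sub
              rw [hmax]
              exact Ideal.mul_mem_left _ _ (Ideal.mem_span_singleton_self t)
            exact hnil (m + n) (hu.mul_left_eq_zero.mp he')
        have htJ : t ∉ J := by
          intro htJ'
          have : t ∈ Ideal.span {t ^ 2} := by
            rw [← Ideal.span_singleton_pow]; exact hle 2 htJ'
          obtain ⟨e, he⟩ := Ideal.mem_span_singleton'.mp this
          have he' : t * (1 - e * t) = 0 := by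
            linear_combination -he
          have hu : IsUnit (1 - e * t) := by
            apply hunit_sub
            rw [hmax]
            exact Ideal.mul_mem_left _ _ (Ideal.mem_span_singleton_self t)
          exact hnil 1 (by rw [pow_one]; exact hu.mul_left_eq_zero.mp he')
        -- pull back J to a prime of R
        set Q := J.comap π with hQ
        have hQprime : Q.IsPrime := hJprime.comap π
        obtain ⟨κ, v, hv, hvindep, hvsup⟩ := h Q hQprime
        -- each v k annihilates w i
        have hkey : ∀ k, v k * w i = 0 := by
          intro k
          have h1 : π (v k) ∈ J := hv k
          have h2 : π (v k) ∈ Ideal.span {t} := by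
            have := hle 1 h1; rwa [pow_one] at this
          obtain ⟨s, hs⟩ := Ideal.mem_span_singleton'.mp h2
          obtain ⟨u, rfl⟩ := Ideal.Quotient.mk_surjective s
          have huQ : u ∈ Q := by
            have hmem : π u * t ∈ J := hs ▸ h1
            rcases hJprime.mem_or_mem hmem with h' | h'
            · exact h'
            · exact absurd h' htJ
          -- v k - u * w i ∈ A, so v k * w i = u * w i * w i
          have h3 : v k - u * w i ∈ A := by
            rw [← Ideal.Quotient.eq_zero_iff_mem]
            show π (v k - u * w i) = 0
            rw [map_sub, map_mul, sub_eq_zero, ← ht]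
            exact hs.symm
          have h4 : v k * w i = u * (w i * w i) := by
            have := Ideal.mem_torsionOf_iff (w i) _ |>.mp h3
            rw [smul_eq_mul, sub_mul, sub_eq_zero] at this
            rw [this]; ring
          -- expand u over the decomposition of Q
          have hspan : (⨆ j, Ideal.span {v j} : Ideal R) = Ideal.span (Set.range v) := by
            rw [← Ideal.submodule_span_eq, Submodule.span_range_eq_iSup]
          have huQ' : u ∈ Ideal.span (Set.range v) := by
            rw [← hspan, hvsup]
            exact huQ
          obtain ⟨c, hc⟩ := Finsupp.mem_span_range_iff_exists_finsupp.mp huQ'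
          -- split off the k-th component
          have hsplit : u = c k * v k + ∑ j ∈ c.support.erase k, c j * v j := by
            rw [← hc]
            rw [Finsupp.sum]
            simp only [smul_eq_mul]
            by_cases hk : k ∈ c.support
            · exact (Finset.add_sum_erase _ _ hk).symm
            · rw [Finset.erase_eq_of_notMem hk,
                Finsupp.notMem_support_iff.mp hk, zero_mul, zero_add]
          set x := v k * w i - c k * v k * (w i * w i) with hx
          have hx1 : x ∈ Ideal.span {v k} := by
            rw [Ideal.mem_span_singleton']
            exact ⟨w i - c k * (w i * w i), by rw [hx]; ring⟩
          have hx2 : x ∈ ⨆ (j) (_ : j ≠ k), Ideal.span {v j} := by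
            have hxeq : x = (∑ j ∈ c.support.erase k, c j * v j) * (w i * w i) := by
              rw [hx, h4, hsplit]; ring
            rw [hxeq]
            apply Ideal.mul_mem_right
            apply Submodule.sum_mem
            intro j hj
            have hjk : j ≠ k := (Finset.mem_erase.mp hj).1
            refine Submodule.mem_iSup_of_mem j (Submodule.mem_iSup_of_mem hjk ?_)
            exact Ideal.mul_mem_left _ _ (Ideal.mem_span_singleton_self _)
          have hx0 : x = 0 := Submodule.disjoint_def.mp (hvindep k) _ hx1 hx2
          have hfin : v k * w i * (1 - c k * w i) = 0 := by
            rw [← hx0, hx]; ring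
          have hu : IsUnit (1 - c k * w i) :=
            isUnit_one_sub_self_of_mem_nonunits _
              ((mem_maximalIdeal _).mp (Ideal.mul_mem_left _ _ (hw i)))
          exact hu.mul_left_eq_zero.mp hfin
        -- hence Q ≤ A, so J = ⊥
        have hQA : Q ≤ A := by
          rw [← hvsup]
          apply iSup_le
          intro k
          rw [Ideal.span_le, Set.singleton_subset_iff]
          rw [hA, SetLike.mem_coe, Ideal.mem_torsionOf_iff, smul_eq_mul]
          exact hkey k
        have : J = Ideal.map π Q :=
          (Ideal.map_comap_of_surjective π Ideal.Quotient.mk_surjective J).symm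
        rw [this]
        apply le_bot_iff.mp
        calc Ideal.map π Q ≤ Ideal.map π A := Ideal.map_mono hQA
          _ = ⊥ := Ideal.map_quotient_self A
    exact aux_pir hmax hJbot
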